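/- Validity of Extensionality: over any complete Heyting algebra A, in the name universe V^A one has ‖∀x∀y(∀z(z∈x ↔ z∈y) → x ≈ y)‖ = 1, and conversely, for all A-names u, v and z: ‖u ≈ v‖ ≤ ‖z ∈ u‖ ⇨ ‖z ∈ v‖, so that ‖∀x∀y(x ≈ y → ∀z(z∈x ↔ z∈y))‖ = 1. -/

import Mathlib

universe u

/-- The universe `V^A` of `A`-names over a complete Heyting algebra `A`:
an `A`-name is a function from a set (of previously constructed `A`-names)
into `A`, here encoded by an indexing type `ι`, a family `elts` of names and
the family `val` of their attached truth values. -/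
inductive HName (A : Type u) : Type (u + 1) where
  | mk (ι : Type u) (elts : ι → HName A) (val : ι → A)

namespace HName

variable {A : Type u}

/-- The indexing type of (the domain of) a name. -/
def ι : HName A → Type u
  | mk ι _ _ => ι

/-- The members of (the domain of) a name. -/
def elts : (u : HName A) → u.ι → HName A
  | mk _ e _ => e

/-- The values attached by a name to the members of its domain. -/
def val : (u : HName A) → u.ι → A
  | mk _ _ v => v

/-- Ordinal rank of a name (used for the recursive definition of truth values). -/
noncomputable def rank : HName A → Ordinal.{u}
  | mk _ e _ => Ordinal.lsub fun i => (e i).rank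

theorem rank_lt {ι : Type u} (e : ι → HName A) (v : ι → A) (i : ι) :
    (e i).rank < (mk ι e v).rank := Ordinal.lt_lsub _ i

variable [Order.Frame A]

/-- The truth value `‖u ≈ v‖` of equality of two names, defined by the recursion
`‖u ≈ v‖ = ⨅_{x ∈ dom u} (u(x) ⇨ ‖x ∈ v‖) ⊓ ⨅_{y ∈ dom v} (v(y) ⇨ ‖y ∈ u‖)`,
where `‖x ∈ v‖ = ⨆_{y ∈ dom v} (v(y) ⊓ ‖y ≈ x‖)` is inlined. -/
noncomputable def eqVal : HName A → HName A → A
  | mk ι e a, mk κ f b =>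
      (⨅ i, a i ⇨ ⨆ j, b j ⊓ eqVal (f j) (e i)) ⊓
      (⨅ j, b j ⇨ ⨆ i, a i ⊓ eqVal (e i) (f j))
termination_by u v => max u.rank v.rank
decreasing_by
  · exact max_lt (lt_max_of_lt_right (rank_lt f b j)) (lt_max_of_lt_left (rank_lt e a i))
  · exact max_lt (lt_max_of_lt_left (rank_lt e a i)) (lt_max_of_lt_right (rank_lt f b j))

/-- The truth value `‖u ∈ v‖ = ⨆_{x ∈ dom v} (v(x) ⊓ ‖x ≈ u‖)` of membership. -/
noncomputable def memVal (u v : HName A) : A :=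
  ⨆ j : v.ι, v.val j ⊓ eqVal (v.elts j) u

theorem rank_elts_lt (u : HName A) (i : u.ι) : (u.elts i).rank < u.rank := by
  cases u; exact rank_lt _ _ _

theorem eqVal_def (u v : HName A) :
    eqVal u v = (⨅ i, u.val i ⇨ memVal (u.elts i) v) ⊓
      (⨅ j, v.val j ⇨ memVal (v.elts j) u) := by
  cases u; cases v; rw [eqVal]; rfl

theorem eqVal_symm (u v : HName A) : eqVal u v = eqVal v u := by
  rw [eqVal_def, eqVal_def, inf_comm]

theorem eqVal_refl : ∀ u : HName A, eqVal u u = ⊤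
  | u => by
    have h : ∀ i : u.ι, u.val i ≤ memVal (u.elts i) u := fun i => by
      refine le_trans ?_ (le_iSup (fun j => u.val j ⊓ eqVal (u.elts j) (u.elts i)) i)
      rw [eqVal_refl (u.elts i), inf_top_eq]
    rw [eqVal_def, eq_top_iff]
    exact le_inf (le_iInf fun i => le_himp_iff.2 (by simpa using h i))
      (le_iInf fun i => le_himp_iff.2 (by simpa using h i))
termination_by u => u.rank
decreasing_by exact rank_elts_lt u i

theorem val_le_memVal (u : HName A) (i : u.ι) : u.val i ≤ memVal (u.elts i) u := by
  refine le_trans ?_ (le_iSup (fun j => u.val j ⊓ eqVal (u.elts j) (u.elts i)) i)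
  rw [eqVal_refl (u.elts i), inf_top_eq]

private theorem dm_step {M N S : Multiset Ordinal.{u}} {a d : Ordinal.{u}}
    (hM : M = a ::ₘ S) (hN : N = d ::ₘ S) (h : a < d) : Multiset.IsDershowitzMannaLT M N :=
  ⟨S, {a}, {d}, by simp, by rw [hM, add_comm]; rfl, by rw [hN, add_comm]; rfl,
    fun y hy => ⟨d, by simp, by rw [Multiset.mem_singleton.1 hy]; exact h⟩⟩

theorem eqVal_trans_aux : ∀ x y z : HName A,
    (eqVal x y ⊓ eqVal y z ≤ eqVal x z) ∧
    (eqVal x y ⊓ memVal x z ≤ memVal y z) ∧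
    (eqVal x y ⊓ memVal z x ≤ memVal z y)
  | x, y, z => by
    have hfst : ∀ (a b : HName A) (i : a.ι),
        eqVal a b ⊓ a.val i ≤ memVal (a.elts i) b := fun a b i =>
      le_himp_iff.1 ((eqVal_def a b ▸ inf_le_left).trans (iInf_le _ i))
    have hsnd : ∀ (a b : HName A) (j : b.ι),
        eqVal a b ⊓ b.val j ≤ memVal (b.elts j) a := fun a b j =>
      le_himp_iff.1 ((eqVal_def a b ▸ inf_le_right).trans (iInf_le _ j))
    refine ⟨?_, ?_, ?_⟩
    · rw [eqVal_def x z]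
      refine le_inf (le_iInf fun i => le_himp_iff.2 ?_) (le_iInf fun k => le_himp_iff.2 ?_)
      · calc eqVal x y ⊓ eqVal y z ⊓ x.val i
            = eqVal y z ⊓ (eqVal x y ⊓ x.val i) := by
              ac_rfl
          _ ≤ eqVal y z ⊓ memVal (x.elts i) y := inf_le_inf_left _ (hfst x y i)
          _ ≤ memVal (x.elts i) z := (eqVal_trans_aux y z (x.elts i)).2.2
      · calc eqVal x y ⊓ eqVal y z ⊓ z.val k
            = eqVal x y ⊓ (eqVal y z ⊓ z.val k) := inf_assoc _ _ _
          _ ≤ eqVal x y ⊓ memVal (z.elts k) y := inf_le_inf_left _ (hsnd y z k)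
          _ = eqVal y x ⊓ memVal (z.elts k) y := by rw [eqVal_symm]
          _ ≤ memVal (z.elts k) x := (eqVal_trans_aux y x (z.elts k)).2.2
    · show eqVal x y ⊓ (⨆ j, z.val j ⊓ eqVal (z.elts j) x) ≤ memVal y z
      rw [inf_iSup_eq]
      refine iSup_le fun j => ?_
      refine le_trans ?_ (le_iSup (fun j => z.val j ⊓ eqVal (z.elts j) y) j)
      calc eqVal x y ⊓ (z.val j ⊓ eqVal (z.elts j) x)
          = z.val j ⊓ (eqVal (z.elts j) x ⊓ eqVal x y) := by
            ac_rfl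
        _ ≤ z.val j ⊓ eqVal (z.elts j) y :=
            inf_le_inf_left _ (eqVal_trans_aux (z.elts j) x y).1
    · show eqVal x y ⊓ (⨆ i, x.val i ⊓ eqVal (x.elts i) z) ≤ memVal z y
      rw [inf_iSup_eq]
      refine iSup_le fun i => ?_
      calc eqVal x y ⊓ (x.val i ⊓ eqVal (x.elts i) z)
          = eqVal (x.elts i) z ⊓ (eqVal x y ⊓ x.val i) := by ac_rfl
        _ ≤ eqVal (x.elts i) z ⊓ memVal (x.elts i) y := inf_le_inf_left _ (hfst x y i)
        _ ≤ memVal z y := (eqVal_trans_aux (x.elts i) z y).2.1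
termination_by x y z => (x.rank ::ₘ y.rank ::ₘ {z.rank} : Multiset Ordinal.{u})
decreasing_by
  · exact dm_step (S := y.rank ::ₘ {z.rank}) (by simp only [← Multiset.singleton_add]; abel)
      (by simp only [← Multiset.singleton_add]) (rank_elts_lt x i)
  · exact dm_step (S := y.rank ::ₘ {x.rank}) (by simp only [← Multiset.singleton_add]; abel)
      (by simp only [← Multiset.singleton_add]; abel) (rank_elts_lt z k)
  · exact dm_step (S := x.rank ::ₘ {y.rank}) (by simp only [← Multiset.singleton_add])
      (by simp only [← Multiset.singleton_add]; abel) (rank_elts_lt z j)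
  · exact dm_step (S := z.rank ::ₘ {y.rank}) (by simp only [← Multiset.singleton_add])
      (by simp only [← Multiset.singleton_add]; abel) (rank_elts_lt x i)

end HName


open HName in
/-- Validity of Extensionality in `V^A`: `‖∀x∀y(∀z(z∈x ↔ z∈y) → x ≈ y)‖ = 1`,
and conversely `‖u ≈ v‖ ≤ ‖z ∈ u‖ ⇨ ‖z ∈ v‖` for all names, whence
`‖∀x∀y(x ≈ y → ∀z(z∈x ↔ z∈y))‖ = 1`. -/
theorem extensionality_valid {A : Type u} [Order.Frame A] :
    ((⨅ u : HName A, ⨅ v : HName A,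
        (⨅ z : HName A, (memVal z u ⇨ memVal z v) ⊓ (memVal z v ⇨ memVal z u)) ⇨
          eqVal u v) = ⊤) ∧
      (∀ u v z : HName A, eqVal u v ≤ memVal z u ⇨ memVal z v) ∧
      ((⨅ u : HName A, ⨅ v : HName A,
        eqVal u v ⇨
          ⨅ z : HName A, (memVal z u ⇨ memVal z v) ⊓ (memVal z v ⇨ memVal z u)) = ⊤) := by
  have key : ∀ u v z : HName A, eqVal u v ≤ memVal z u ⇨ memVal z v := fun u v z =>
    le_himp_iff.2 (eqVal_trans_aux u v z).2.2
  refine ⟨?_, key, ?_⟩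
  · rw [eq_top_iff]
    refine le_iInf fun u => le_iInf fun v => le_himp_iff.2 ?_
    rw [top_inf_eq, eqVal_def]
    refine le_inf (le_iInf fun i => le_himp_iff.2 ?_) (le_iInf fun j => le_himp_iff.2 ?_)
    · have h1 : (⨅ z : HName A, (memVal z u ⇨ memVal z v) ⊓ (memVal z v ⇨ memVal z u)) ≤
          memVal (u.elts i) u ⇨ memVal (u.elts i) v :=
        (iInf_le _ (u.elts i)).trans inf_le_left
      calc (⨅ z : HName A, (memVal z u ⇨ memVal z v) ⊓ (memVal z v ⇨ memVal z u)) ⊓ u.val i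
          ≤ (memVal (u.elts i) u ⇨ memVal (u.elts i) v) ⊓ memVal (u.elts i) u :=
            inf_le_inf h1 (val_le_memVal u i)
        _ ≤ memVal (u.elts i) v := himp_inf_le
    · have h1 : (⨅ z : HName A, (memVal z u ⇨ memVal z v) ⊓ (memVal z v ⇨ memVal z u)) ≤
          memVal (v.elts j) v ⇨ memVal (v.elts j) u :=
        (iInf_le _ (v.elts j)).trans inf_le_right
      calc (⨅ z : HName A, (memVal z u ⇨ memVal z v) ⊓ (memVal z v ⇨ memVal z u)) ⊓ v.val j
          ≤ (memVal (v.elts j) v ⇨ memVal (v.elts j) u) ⊓ memVal (v.elts j) v :=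
            inf_le_inf h1 (val_le_memVal v j)
        _ ≤ memVal (v.elts j) u := himp_inf_le
  · rw [eq_top_iff]
    refine le_iInf fun u => le_iInf fun v => le_himp_iff.2 ?_
    rw [top_inf_eq]
    refine le_iInf fun z => le_inf (key u v z) ?_
    rw [eqVal_symm]
    exact key v u z
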